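/- Let n ≥ 2, let H be an n×n real symmetric positive definite matrix, and let ξ ∈ ℝⁿ. Define D as the diagonal matrix with entries D_jj = √((H⁻¹)_{jj}), ρ = D⁻¹ H⁻¹ D⁻¹, and Z = −D⁻¹ H⁻¹ ξ with entries Z₁,…,Z_n. Let h* be the unique minimizer over {h ∈ ℝⁿ : h₁ ≤ 0} of h ↦ ‖h + H⁻¹ξ‖_H². Then: if Z₁ < 0, h* = −H⁻¹ξ; and if Z₁ ≥ 0, then h*₁ = 0 and h*_j = D_jj (Z_j − ρ_{1j} Z₁) for j = 2,…,n. -/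

import Mathlib

open Matrix

/-- Squared `H`-norm: `‖a‖_H² = aᵀ H a`. -/
def normHsq {n : ℕ} (H : Matrix (Fin n) (Fin n) ℝ) (a : Fin n → ℝ) : ℝ :=
  a ⬝ᵥ H.mulVec a

lemma bilin_symm {n : ℕ} {H : Matrix (Fin n) (Fin n) ℝ} (hH : H.IsHermitian)
    (x y : Fin n → ℝ) : x ⬝ᵥ H.mulVec y = y ⬝ᵥ H.mulVec x := by
  have hsymm : Hᵀ = H := by
    ext i j
    simpa using hH.apply i j
  calc x ⬝ᵥ H.mulVec y = (x ᵥ* H) ⬝ᵥ y := dotProduct_mulVec _ _ _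
    _ = (x ᵥ* Hᵀ) ⬝ᵥ y := by rw [hsymm]
    _ = (H *ᵥ x) ⬝ᵥ y := by rw [vecMul_transpose]
    _ = y ⬝ᵥ H.mulVec x := dotProduct_comm _ _

lemma normHsq_add {n : ℕ} {H : Matrix (Fin n) (Fin n) ℝ} (hH : H.IsHermitian)
    (a b : Fin n → ℝ) :
    normHsq H (a + b) = normHsq H a + 2 * (a ⬝ᵥ H.mulVec b) + normHsq H b := by
  unfold normHsq
  rw [mulVec_add, dotProduct_add, add_dotProduct, add_dotProduct, bilin_symm hH b a]
  ring

lemma normHsq_smul {n : ℕ} (H : Matrix (Fin n) (Fin n) ℝ) (t : ℝ) (x : Fin n → ℝ) :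
    normHsq H (t • x) = t ^ 2 * normHsq H x := by
  unfold normHsq
  rw [mulVec_smul, dotProduct_smul, smul_dotProduct]
  simp [smul_eq_mul]
  ring

lemma normHsq_nonneg {n : ℕ} {H : Matrix (Fin n) (Fin n) ℝ} (hH : H.PosDef)
    (x : Fin n → ℝ) : 0 ≤ normHsq H x := by
  have := hH.posSemidef.dotProduct_mulVec_nonneg x
  simpa [normHsq] using this

lemma normHsq_eq_zero {n : ℕ} {H : Matrix (Fin n) (Fin n) ℝ} (hH : H.PosDef)
    {x : Fin n → ℝ} (h : normHsq H x ≤ 0) : x = 0 := by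
  by_contra hx
  have := hH.dotProduct_mulVec_pos hx
  simp only [star_trivial] at this
  unfold normHsq at h
  linarith

/-- Closed form of the FPPE limit quadratic program with one
degenerate buyer: with `D = Diag(√((H⁻¹)_jj))`, `ρ = D⁻¹H⁻¹D⁻¹`, `Z = −D⁻¹H⁻¹ξ`,
the unique minimizer `h*` of `h ↦ ‖h + H⁻¹ξ‖_H²` over `{h : h₁ ≤ 0}` satisfies:
if `Z₁ < 0` then `h* = −H⁻¹ξ`; if `Z₁ ≥ 0` then `h*₁ = 0` and
`h*_j = D_jj (Z_j − ρ_{1j} Z₁)` for `j ≠ 1`. -/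
theorem stmt4 {n : ℕ} [NeZero n] (hn : 2 ≤ n)
    (H : Matrix (Fin n) (Fin n) ℝ) (hH : H.PosDef)
    (ξ : Fin n → ℝ)
    (D : Matrix (Fin n) (Fin n) ℝ)
    (hD : D = Matrix.diagonal (fun j => Real.sqrt (H⁻¹ j j)))
    (ρ : Matrix (Fin n) (Fin n) ℝ) (hρ : ρ = D⁻¹ * H⁻¹ * D⁻¹)
    (Z : Fin n → ℝ) (hZ : Z = -(D⁻¹.mulVec (H⁻¹.mulVec ξ)))
    (hstar : Fin n → ℝ)
    (hstar_mem : hstar 0 ≤ 0)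
    (hstar_min : ∀ y : Fin n → ℝ, y 0 ≤ 0 →
      normHsq H (hstar + H⁻¹.mulVec ξ) ≤ normHsq H (y + H⁻¹.mulVec ξ)) :
    (Z 0 < 0 → hstar = -(H⁻¹.mulVec ξ)) ∧
    (0 ≤ Z 0 → hstar 0 = 0 ∧
      ∀ j : Fin n, j ≠ 0 → hstar j = D j j * (Z j - ρ 0 j * Z 0)) := by
  have hHerm := hH.isHermitian
  have hHinv : (H⁻¹).PosDef := hH.inv
  set v : Fin n → ℝ := H⁻¹.mulVec ξ with hv
  have hdiagpos : ∀ j, 0 < H⁻¹ j j := by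
    intro j
    have h1 : (Pi.single j 1 : Fin n → ℝ) ≠ 0 := by
      intro h
      have := congrFun h j
      simp at this
    have := hHinv.dotProduct_mulVec_pos h1
    simpa [mulVec_single, single_dotProduct] using this
  have hdpos : ∀ j, 0 < Real.sqrt (H⁻¹ j j) := fun j => Real.sqrt_pos.2 (hdiagpos j)
  have hDinv : D⁻¹ = Matrix.diagonal (fun j => (Real.sqrt (H⁻¹ j j))⁻¹) := by
    apply Matrix.inv_eq_right_inv
    rw [hD, Matrix.diagonal_mul_diagonal]
    have h1 : (fun j => Real.sqrt (H⁻¹ j j) * (Real.sqrt (H⁻¹ j j))⁻¹) = fun _ : Fin n => (1:ℝ) := by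
      funext j
      exact mul_inv_cancel₀ (hdpos j).ne'
    rw [h1, Matrix.diagonal_one]
  have hZj : ∀ j, Z j = -((Real.sqrt (H⁻¹ j j))⁻¹ * v j) := by
    intro j
    rw [hZ]
    simp [hDinv, mulVec_diagonal]
  have hρ0j : ∀ j, ρ 0 j = (Real.sqrt (H⁻¹ 0 0))⁻¹ * (H⁻¹ 0 j * (Real.sqrt (H⁻¹ j j))⁻¹) := by
    intro j
    rw [hρ, hDinv, Matrix.mul_diagonal, Matrix.diagonal_mul]
    ring
  constructor
  · -- case Z 0 < 0
    intro hZ0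
    have hv0 : 0 < v 0 := by
      rw [hZj 0] at hZ0
      have h2 : 0 < (Real.sqrt (H⁻¹ 0 0))⁻¹ * v 0 := by linarith
      have h3 : v 0 = Real.sqrt (H⁻¹ 0 0) * ((Real.sqrt (H⁻¹ 0 0))⁻¹ * v 0) := by
        rw [← mul_assoc, mul_inv_cancel₀ (hdpos 0).ne', one_mul]
      rw [h3]
      exact mul_pos (hdpos 0) h2
    have hfeas : (-v) 0 ≤ 0 := by
      simp only [Pi.neg_apply]
      linarith
    have hle := hstar_min (-v) hfeas
    have hzero : normHsq H ((-v) + v) = 0 := by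
      simp [normHsq]
    have hsum : hstar + v = 0 := by
      apply normHsq_eq_zero hH
      linarith
    funext j
    have := congrFun hsum j
    simp only [Pi.add_apply, Pi.zero_apply] at this
    simp only [Pi.neg_apply]
    linarith
  · -- case 0 ≤ Z 0
    intro hZ0
    have hv0 : v 0 ≤ 0 := by
      rw [hZj 0] at hZ0
      have h2 : (Real.sqrt (H⁻¹ 0 0))⁻¹ * v 0 ≤ 0 := by linarith
      have h3 : v 0 = Real.sqrt (H⁻¹ 0 0) * ((Real.sqrt (H⁻¹ 0 0))⁻¹ * v 0) := by
        rw [← mul_assoc, mul_inv_cancel₀ (hdpos 0).ne', one_mul]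
      rw [h3]
      exact mul_nonpos_of_nonneg_of_nonpos (hdpos 0).le h2
    set c : ℝ := v 0 / H⁻¹ 0 0 with hc
    have hc0 : c ≤ 0 := div_nonpos_iff.2 (Or.inr ⟨hv0, (hdiagpos 0).le⟩)
    set x0 : Fin n → ℝ := fun j => c * H⁻¹ j 0 with hx0
    have hx00 : x0 0 = v 0 := by
      simp only [hx0, hc]
      exact div_mul_cancel₀ _ (hdiagpos 0).ne'
    have hHmul : H * H⁻¹ = 1 :=
      Matrix.mul_nonsing_inv H (isUnit_iff_ne_zero.2 hH.det_pos.ne')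
    have hHx0 : H.mulVec x0 = c • ((Pi.single 0 1 : Fin n → ℝ)) := by
      have hx0' : x0 = c • (H⁻¹.mulVec ((Pi.single 0 1 : Fin n → ℝ))) := by
        funext j
        simp [hx0, mulVec_single, smul_eq_mul]
      rw [hx0', mulVec_smul, mulVec_mulVec, hHmul, one_mulVec]
    have hmin : ∀ y : Fin n → ℝ, y 0 ≤ 0 → normHsq H x0 ≤ normHsq H (y + v) := by
      intro y hy
      have hdecomp : y + v = x0 + (y + v - x0) := by
        funext j
        simp
      set w : Fin n → ℝ := y + v - x0 with hw
      rw [hdecomp, normHsq_add hHerm]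
      have hw0 : w 0 = y 0 := by
        simp [hw, hx00]
      have hcross : x0 ⬝ᵥ H.mulVec w = c * y 0 := by
        rw [bilin_symm hHerm, hHx0, dotProduct_smul]
        simp [dotProduct_single, hw0, smul_eq_mul]
      rw [hcross]
      have h1 : 0 ≤ c * y 0 := by nlinarith [hc0, hy]
      have h2 : 0 ≤ normHsq H w := normHsq_nonneg hH w
      linarith
    have hsv : x0 - v + v = x0 := by
      funext j; simp
    have hA := hstar_min (x0 - v) (by simp [hx00])
    rw [hsv] at hA
    have hB := hmin hstar hstar_mem
    have heq : normHsq H (hstar + v) = normHsq H x0 := le_antisymm hA hB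
    set a : Fin n → ℝ := hstar + v with ha
    have hmidfeas : (((1:ℝ)/2) • (hstar + (x0 - v))) 0 ≤ 0 := by
      have : (((1:ℝ)/2) • (hstar + (x0 - v))) 0 = (1/2) * (hstar 0 + (x0 0 - v 0)) := by
        simp [smul_eq_mul]
      rw [this, hx00]
      nlinarith [hstar_mem]
    have hmid := hmin (((1:ℝ)/2) • (hstar + (x0 - v))) hmidfeas
    have hmid' : ((1:ℝ)/2) • (hstar + (x0 - v)) + v = ((1:ℝ)/2) • (a + x0) := by
      funext j
      simp [ha, smul_eq_mul]
      ring
    rw [hmid'] at hmid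
    have hexp : normHsq H (((1:ℝ)/2) • (a + x0))
        = (1/4) * (normHsq H a + 2 * (a ⬝ᵥ H.mulVec x0) + normHsq H x0) := by
      rw [normHsq_smul, normHsq_add hHerm]
      ring
    have hBab : normHsq H x0 ≤ a ⬝ᵥ H.mulVec x0 := by
      rw [hexp, heq] at hmid
      linarith
    have hdiffval : normHsq H (a - x0)
        = normHsq H a - 2 * (a ⬝ᵥ H.mulVec x0) + normHsq H x0 := by
      have hab : a - x0 = a + (-1 : ℝ) • x0 := by
        funext j
        simp only [Pi.sub_apply, Pi.add_apply, Pi.smul_apply, smul_eq_mul]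
        ring
      rw [hab, normHsq_add hHerm, normHsq_smul]
      have : a ⬝ᵥ H.mulVec ((-1 : ℝ) • x0) = -(a ⬝ᵥ H.mulVec x0) := by
        rw [mulVec_smul, dotProduct_smul]
        simp
      rw [this]
      ring
    have hdiff : normHsq H (a - x0) ≤ 0 := by
      rw [hdiffval, heq]
      linarith
    have hzero : a - x0 = 0 := normHsq_eq_zero hH hdiff
    have hstar_eq : ∀ j, hstar j = x0 j - v j := by
      intro j
      have := congrFun hzero j
      simp only [Pi.sub_apply, Pi.zero_apply, ha, Pi.add_apply] at this
      linarith
    constructor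
    · rw [hstar_eq 0, hx00]
      ring
    · intro j hj
      have hsymmH : H⁻¹ 0 j = H⁻¹ j 0 := by
        have := hHinv.1.apply j 0
        simpa using this
      rw [hstar_eq j, hD, Matrix.diagonal_apply_eq, hZj j, hZj 0, hρ0j j]
      simp only [hx0, hc]
      rw [← hsymmH]
      set s0 := Real.sqrt (H⁻¹ 0 0) with hs0def
      set sj := Real.sqrt (H⁻¹ j j) with hsjdef
      have hs0 : s0 ≠ 0 := (hdpos 0).ne'
      have hsj : sj ≠ 0 := (hdpos j).ne'
      have hsq : s0 * s0 = H⁻¹ 0 0 := Real.mul_self_sqrt (hdiagpos 0).le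
      rw [← hsq]
      field_simp
      ring
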